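/- Fix a real λ with 0 ≤ λ < 1. For each n, let u₁, …, u_n be i.i.d. uniform on {0, 1, 2}, let N_k = #{j : u_j = k}, and set S₃ = N₀² + N₁² + N₂² − (N₀N₁ + N₀N₂ + N₁N₂). Then for every function D : ℕ → ℕ with D(n)³/n → 0 as n → ∞, there exists N₀ such that for all n ≥ N₀: Σ_{d=0}^{D(n)} (λ^{2d} / (n^d d!)) · E[S₃^d] ≤ 8 · Σ_{d=0}^{∞} d² λ^{2d} + 1, and in particular sup_n Σ_{d=0}^{D(n)} (λ^{2d} / (n^d d!)) · E[S₃^d] < ∞. -/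

import Mathlib

open MeasureTheory Filter

/-- Number of coordinates of `u` equal to `k`. -/
def cnt3 (n : ℕ) (u : Fin n → Fin 3) (k : Fin 3) : ℕ :=
  (Finset.univ.filter fun j => u j = k).card

/-- `S₃ = N₀² + N₁² + N₂² − (N₀N₁ + N₀N₂ + N₁N₂)` for the counts of `u`. -/
noncomputable def S3 (n : ℕ) (u : Fin n → Fin 3) : ℝ :=
  (cnt3 n u 0 : ℝ) ^ 2 + (cnt3 n u 1 : ℝ) ^ 2 + (cnt3 n u 2 : ℝ) ^ 2
    - ((cnt3 n u 0 : ℝ) * (cnt3 n u 1 : ℝ) + (cnt3 n u 0 : ℝ) * (cnt3 n u 2 : ℝ)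
        + (cnt3 n u 1 : ℝ) * (cnt3 n u 2 : ℝ))

namespace S16
open Finset Complex

noncomputable def zeta : ℂ := ⟨-1/2, Real.sqrt 3 / 2⟩

lemma h3 : Real.sqrt 3 ^ 2 = 3 := Real.sq_sqrt (by norm_num)

lemma hz2 : zeta^2 = starRingEnd ℂ zeta := by
  apply Complex.ext <;>
    simp [pow_two, Complex.mul_re, Complex.mul_im, zeta] <;> nlinarith [h3]

lemma hnormSq : zeta * starRingEnd ℂ zeta = 1 := by
  rw [Complex.mul_conj]
  have : Complex.normSq zeta = 1 := by
    simp [Complex.normSq_apply, zeta]; nlinarith [h3]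
  rw [this]; norm_num

lemma hz3 : zeta^3 = 1 := by
  have : zeta^3 = zeta * (zeta^2) := by ring
  rw [this, hz2, hnormSq]

lemma hsum : 1 + zeta + zeta^2 = 0 := by
  rw [hz2]
  apply Complex.ext <;> simp [zeta] <;> ring

lemma zeta_pow_mod (c : ℕ) : zeta ^ c = zeta ^ (c % 3) := by
  conv_lhs => rw [← Nat.div_add_mod c 3]
  rw [pow_add, pow_mul, hz3, one_pow, one_mul]

lemma root_sum (c : ℕ) : 1 + zeta^c + (zeta^c)^2 = if c % 3 = 0 then (3:ℂ) else 0 := by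
  rw [zeta_pow_mod]
  have hlt : c % 3 < 3 := Nat.mod_lt c (by norm_num)
  interval_cases h : c % 3
  · norm_num
  · simpa using hsum
  · have h4 : (zeta^2)^2 = zeta := by
      have : (zeta^2)^2 = zeta^3 * zeta := by ring
      rw [this, hz3, one_mul]
    rw [h4]
    simp only [if_neg (by norm_num : ¬(2:ℕ) = 0)]
    linear_combination hsum

noncomputable def w (k : Fin 3) : ℂ := zeta ^ (k : ℕ)

lemma conj_w (k : Fin 3) : starRingEnd ℂ (w k) = (w k)^2 := by
  rw [w, map_pow, ← hz2, ← pow_mul, ← pow_mul, Nat.mul_comm]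

lemma w_pow_sum (c : ℕ) : (∑ t : Fin 3, (w t)^c) = if c % 3 = 0 then (3:ℂ) else 0 := by
  rw [Fin.sum_univ_three, ← root_sum c]
  have h0 : w 0 = 1 := by simp [w]
  have h1 : w 1 = zeta := by simp [w]
  have h2 : w 2 = zeta^2 := by rw [w]; norm_num
  rw [h0, h1, h2, one_pow, ← pow_mul, ← pow_mul, Nat.mul_comm]

def cnt {p n : ℕ} (f : Fin p → Fin n) (x : Fin n) : ℕ :=
  (Finset.univ.filter fun i => f i = x).card
def good {p q n : ℕ} (fg : (Fin p → Fin n) × (Fin q → Fin n)) : Prop :=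
  ∀ x, cnt fg.1 x ≡ cnt fg.2 x [MOD 3]
instance {p q n : ℕ} : DecidablePred (good (p := p) (q := q) (n := n)) := fun _ =>
  Fintype.decidableForallFintype
noncomputable def V (p q n : ℕ) : Finset ((Fin p → Fin n) × (Fin q → Fin n)) :=
  Finset.univ.filter good
lemma cnt_le {p n : ℕ} (f : Fin p → Fin n) (x : Fin n) : cnt f x ≤ p := by
  simpa [cnt] using (Finset.card_filter_le _ _).trans (by simp)
lemma exists_of_cnt_pos {p n : ℕ} {f : Fin p → Fin n} {x : Fin n} (h : 1 ≤ cnt f x) :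
    ∃ i, f i = x := by
  obtain ⟨i, hi⟩ := Finset.card_pos.mp h
  exact ⟨i, (Finset.mem_filter.mp hi).2⟩
lemma cnt_succAbove {s n : ℕ} (h : Fin (s + 1) → Fin n) (j : Fin (s + 1)) (x : Fin n) :
    cnt h x = (if h j = x then 1 else 0) + cnt (h ∘ j.succAbove) x := by
  simp only [cnt, Finset.card_filter]
  rw [Fin.sum_univ_succAbove (fun i => if h i = x then 1 else 0) j]
  rfl
lemma insertNth_eta {s n : ℕ} (h : Fin (s + 1) → Fin n) (j : Fin (s + 1)) :
    Fin.insertNth j (h j) (h ∘ j.succAbove) = h := by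
  funext k
  refine Fin.succAboveCases j ?_ ?_ k
  · simp
  · intro i; simp

def psi1 (p q n : ℕ) :
    Fin (q + 1) × Fin n × ((Fin p → Fin n) × (Fin q → Fin n)) →
      (Fin (p + 1) → Fin n) × (Fin (q + 1) → Fin n) :=
  fun z => (Fin.insertNth (Fin.last p) z.2.1 z.2.2.1, Fin.insertNth z.1 z.2.1 z.2.2.2)

lemma cover1 (p q n : ℕ) :
    (V (p+1) (q+1) n).filter (fun fg => ∃ j, fg.2 j = fg.1 (Fin.last p)) ⊆
      ((univ : Finset (Fin (q+1))) ×ˢ (univ : Finset (Fin n)) ×ˢ V p q n).image (psi1 p q n) := by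
  intro fg hfg
  obtain ⟨hV, j, hj⟩ := Finset.mem_filter.mp hfg
  have hgood : good fg := (Finset.mem_filter.mp hV).2
  set f := fg.1 with hf
  set g := fg.2 with hg
  set v := f (Fin.last p) with hv
  refine Finset.mem_image.mpr ⟨⟨j, v, (f ∘ (Fin.last p).succAbove, g ∘ j.succAbove)⟩, ?_, ?_⟩
  · simp only [Finset.mem_product, Finset.mem_univ, true_and, V, Finset.mem_filter]
    intro x
    have h1 := cnt_succAbove f (Fin.last p) x
    have h2 := cnt_succAbove g j x
    have he : (if f (Fin.last p) = x then 1 else 0) = (if g j = x then 1 else 0) := by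
      rw [hj]
    have := hgood x
    rw [h1, h2, ← he] at this
    exact Nat.ModEq.add_left_cancel' _ this
  · have e1 : Fin.insertNth (Fin.last p) v (f ∘ (Fin.last p).succAbove) = f := by
      exact insertNth_eta f (Fin.last p)
    have e2 : Fin.insertNth j v (g ∘ j.succAbove) = g := by
      conv_lhs => rw [← hj]
      exact insertNth_eta g j
    show (_, _) = fg
    rw [e1, e2]

def psi2 (p q n : ℕ) :
    Fin (p + 2) × Fin (p + 1) × Fin n × ((Fin p → Fin n) × (Fin q → Fin n)) →
      (Fin (p + 3) → Fin n) × (Fin q → Fin n) :=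
  fun z => (Fin.insertNth (Fin.last (p + 2)) z.2.2.1
      (Fin.insertNth z.1 z.2.2.1 (Fin.insertNth z.2.1 z.2.2.1 z.2.2.2.1)), z.2.2.2.2)

lemma cnt_g_zero {p q n : ℕ} {fg : (Fin (p+1) → Fin n) × (Fin q → Fin n)}
    (hgood : good fg) (hno : ¬ ∃ j, fg.2 j = fg.1 (Fin.last p)) :
    3 ∣ cnt fg.1 (fg.1 (Fin.last p)) ∧ 1 ≤ cnt fg.1 (fg.1 (Fin.last p)) := by
  set v := fg.1 (Fin.last p) with hv
  have hg0 : cnt fg.2 v = 0 := by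
    by_contra h
    exact hno (exists_of_cnt_pos (Nat.one_le_iff_ne_zero.mpr h))
  have h3 : cnt fg.1 v ≡ 0 [MOD 3] := by
    have := hgood v; rwa [hg0] at this
  have h1 : 1 ≤ cnt fg.1 v := by
    rw [cnt_succAbove fg.1 (Fin.last p) v, ← hv]
    simp
  exact ⟨(Nat.modEq_zero_iff_dvd).mp h3, h1⟩

lemma cover2 (p q n : ℕ) :
    (V (p+3) q n).filter (fun fg => ¬ ∃ j, fg.2 j = fg.1 (Fin.last (p+2))) ⊆
      ((univ : Finset (Fin (p+2))) ×ˢ (univ : Finset (Fin (p+1))) ×ˢ (univ : Finset (Fin n))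
        ×ˢ V p q n).image (psi2 p q n) := by
  intro fg hfg
  obtain ⟨hV, hno⟩ := Finset.mem_filter.mp hfg
  have hgood : good fg := (Finset.mem_filter.mp hV).2
  set f := fg.1 with hf
  set g := fg.2 with hg
  set v := f (Fin.last (p+2)) with hv
  obtain ⟨hdvd, hpos⟩ := cnt_g_zero hgood hno
  have h3 : 3 ≤ cnt f v := Nat.le_of_dvd hpos hdvd
  set f0 := f ∘ (Fin.last (p+2)).succAbove with hf0
  have hc0 : cnt f v = 1 + cnt f0 v := by
    rw [cnt_succAbove f (Fin.last (p+2)) v, ← hv, if_pos rfl]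
  have h2 : 2 ≤ cnt f0 v := by omega
  obtain ⟨i2, hi2⟩ := exists_of_cnt_pos (by omega : 1 ≤ cnt f0 v)
  set f1 := f0 ∘ i2.succAbove with hf1
  have hc1 : cnt f0 v = 1 + cnt f1 v := by
    rw [cnt_succAbove f0 i2 v, hi2, if_pos rfl]
  obtain ⟨i1, hi1⟩ := exists_of_cnt_pos (by omega : 1 ≤ cnt f1 v)
  set f2 := f1 ∘ i1.succAbove with hf2
  have hc2 : cnt f1 v = 1 + cnt f2 v := by
    rw [cnt_succAbove f1 i1 v, hi1, if_pos rfl]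
  refine Finset.mem_image.mpr ⟨⟨i2, i1, v, (f2, g)⟩, ?_, ?_⟩
  · simp only [Finset.mem_product, Finset.mem_univ, true_and, V, Finset.mem_filter]
    intro x
    have e1 := cnt_succAbove f (Fin.last (p+2)) x
    have e2 := cnt_succAbove f0 i2 x
    have e3 := cnt_succAbove f1 i1 x
    rw [← hv] at e1; rw [hi2] at e2; rw [hi1] at e3
    have hx : cnt f x = cnt f2 x + 3 * (if v = x then 1 else 0) := by
      rw [e1, e2, e3]; ring
    have hmod : cnt f2 x ≡ cnt f x [MOD 3] := by
      rw [hx]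
      exact (Nat.modEq_iff_dvd' (Nat.le_add_right _ _)).mpr ⟨(if v = x then 1 else 0), by omega⟩
    exact hmod.trans (hgood x)
  · have r1 : Fin.insertNth i1 v f2 = f1 := by rw [← hi1]; exact insertNth_eta f1 i1
    have r2 : Fin.insertNth i2 v f1 = f0 := by rw [← hi2]; exact insertNth_eta f0 i2
    have r3 : Fin.insertNth (Fin.last (p+2)) v f0 = f := by
      conv_lhs => rw [hv]
      exact insertNth_eta f (Fin.last (p+2))
    show (_, _) = fg
    rw [r1, r2, r3]

lemma no_case2 {p q n : ℕ} (hp : p + 1 < 3) :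
    (V (p+1) q n).filter (fun fg => ¬ ∃ j, fg.2 j = fg.1 (Fin.last p)) = ∅ := by
  rw [Finset.eq_empty_iff_forall_notMem]
  intro fg hfg
  obtain ⟨hV, hno⟩ := Finset.mem_filter.mp hfg
  have hgood : good fg := (Finset.mem_filter.mp hV).2
  obtain ⟨hdvd, hpos⟩ := cnt_g_zero hgood hno
  have := cnt_le fg.1 (fg.1 (Fin.last p))
  have := Nat.le_of_dvd hpos hdvd
  omega

lemma card_swap (p q n : ℕ) : (V p q n).card = (V q p n).card := by
  refine Finset.card_bij (fun a _ => Prod.swap a) ?_ ?_ ?_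
  · intro a ha
    simp only [V, Finset.mem_filter, Finset.mem_univ, true_and] at ha ⊢
    exact fun x => (ha x).symm
  · intro a _ b _ h
    exact Prod.swap_injective h
  · intro b hb
    refine ⟨Prod.swap b, ?_, by simp⟩
    simp only [V, Finset.mem_filter, Finset.mem_univ, true_and] at hb ⊢
    exact fun x => (hb x).symm

lemma card_split (p q n : ℕ) :
    (V (p+1) q n).card =
      ((V (p+1) q n).filter (fun fg => ∃ j, fg.2 j = fg.1 (Fin.last p))).card +
      ((V (p+1) q n).filter (fun fg => ¬ ∃ j, fg.2 j = fg.1 (Fin.last p))).card :=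
  (Finset.card_filter_add_card_filter_not _).symm

lemma card_part1 (p q n : ℕ) :
    ((V (p+1) (q+1) n).filter (fun fg => ∃ j, fg.2 j = fg.1 (Fin.last p))).card ≤
      (q+1) * (n * (V p q n).card) := by
  refine le_trans (Finset.card_le_card (cover1 p q n)) ?_
  refine le_trans (Finset.card_image_le) ?_
  simp [Finset.card_product]

lemma card_part2 (p q n : ℕ) :
    ((V (p+3) q n).filter (fun fg => ¬ ∃ j, fg.2 j = fg.1 (Fin.last (p+2)))).card ≤
      (p+2) * ((p+1) * (n * (V p q n).card)) := by
  refine le_trans (Finset.card_le_card (cover2 p q n)) ?_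
  refine le_trans (Finset.card_image_le) ?_
  simp [Finset.card_product, mul_assoc]

lemma card_V00' (n : ℕ) : (V 0 0 n).card = 1 := by
  have : V 0 0 n = Finset.univ := by
    rw [Finset.eq_univ_iff_forall]
    intro fg
    simp only [V, Finset.mem_filter, Finset.mem_univ, true_and]
    intro x
    have h1 : cnt fg.1 x = 0 := by simp [cnt]
    have h2 : cnt fg.2 x = 0 := by simp [cnt]
    rw [h1, h2]
  rw [this]
  simp [Finset.card_univ]

lemma card_V0q (q n : ℕ) :
    (V 0 (q+3) n).card ≤ (q+2) * ((q+1) * (n * (V 0 q n).card)) := by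
  rw [card_swap 0 (q+3) n]
  have he : V (q+3) 0 n = (V (q+3) 0 n).filter
      (fun fg => ¬ ∃ j, fg.2 j = fg.1 (Fin.last (q+2))) := by
    refine (Finset.filter_true_of_mem ?_).symm
    intro fg _
    rintro ⟨j, -⟩
    exact j.elim0
  rw [he]
  refine le_trans (card_part2 q 0 n) ?_
  rw [card_swap q 0 n]

lemma key (P Q n : ℕ) (h3 : P + 3 ≤ Q) (hn : Q^3 ≤ n) :
    ((P:ℝ)+2)*((P:ℝ)+1)*((n:ℝ) + (Q:ℝ)^2) ≤ (Q:ℝ)^2 * n := by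
  have h3' : (P:ℝ) + 3 ≤ Q := by exact_mod_cast h3
  have hn' : (Q:ℝ)^3 ≤ n := by exact_mod_cast hn
  have hP : (0:ℝ) ≤ P := Nat.cast_nonneg P
  have hQ3 : (3:ℝ) ≤ Q := by linarith
  have h1 : ((P:ℝ)+2)*((P:ℝ)+1) ≤ ((Q:ℝ)-1)*((Q:ℝ)-2) := by nlinarith
  have h2 : ((Q:ℝ)-1)*((Q:ℝ)-2)*((n:ℝ) + (Q:ℝ)^2) ≤ (Q:ℝ)^2 * n := by nlinarith
  have hn0 : (0:ℝ) ≤ (n:ℝ) + (Q:ℝ)^2 := by positivity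
  nlinarith [mul_le_mul_of_nonneg_right h1 hn0]

lemma count_bound (Q n : ℕ) (hQ : 1 ≤ Q) (hn : Q^3 ≤ n) :
    ∀ N p q m : ℕ, p + q ≤ N → q = p + 3*m → q ≤ Q →
    ((V p q n).card : ℝ) * (n:ℝ)^q ≤
      (q.factorial : ℝ) * (n:ℝ)^(p+m) * ((n:ℝ) + (Q:ℝ)^2)^q := by
  have hn1 : 1 ≤ n := le_trans (Nat.one_le_pow _ _ hQ) hn
  have hnR : (1:ℝ) ≤ (n:ℝ) := by exact_mod_cast hn1
  have hn0 : (0:ℝ) < (n:ℝ) := by linarith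
  have hB0 : (0:ℝ) < (n:ℝ) + (Q:ℝ)^2 := by positivity
  have hnB : (n:ℝ) ≤ (n:ℝ) + (Q:ℝ)^2 := le_add_of_nonneg_right (by positivity)
  intro N
  induction N with
  | zero =>
    intro p q m hpq hqm hqQ
    have hp0 : p = 0 := by omega
    have hq0 : q = 0 := by omega
    subst hp0; subst hq0
    have hm0 : m = 0 := by omega
    subst hm0
    simp [card_V00']
  | succ N ih =>
    intro p q m hpq hqm hqQ
    set B : ℝ := (n:ℝ) + (Q:ℝ)^2 with hBdef
    rcases p with _ | p'
    case zero =>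
      rcases m with _ | m'
      case zero =>
        have hq0 : q = 0 := by omega
        subst hq0
        simp [card_V00']
      case succ =>
        have hq : q = 3*m' + 3 := by omega
        subst hq
        have IH := ih 0 (3*m') m' (by omega) (by omega) (by omega)
        have h0 : ((V 0 (3*m'+3) n).card : ℝ) ≤
            ((3*m'+2) : ℝ) * (((3*m'+1):ℝ) * ((n:ℝ) * ((V 0 (3*m') n).card : ℝ))) := by
          exact_mod_cast card_V0q (3*m') n
        have hfact : (((3*m'+3).factorial : ℕ) : ℝ) =
            ((3*m'+3):ℝ) * (((3*m'+2):ℝ) * (((3*m'+1):ℝ) * (((3*m').factorial : ℕ) : ℝ))) := by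
          have : (3*m'+3).factorial = (3*m'+3) * ((3*m'+2) * ((3*m'+1) * (3*m').factorial)) := by
            have e1 : 3*m'+3 = (3*m'+2)+1 := by omega
            have e2 : 3*m'+2 = (3*m'+1)+1 := by omega
            have e3 : 3*m'+1 = (3*m')+1 := by omega
            rw [e1, Nat.factorial_succ, e2, Nat.factorial_succ, e3, Nat.factorial_succ]
          exact_mod_cast this
        calc ((V 0 (3*m'+3) n).card : ℝ) * (n:ℝ)^(3*m'+3)
            ≤ (((3*m'+2):ℝ) * (((3*m'+1):ℝ) * ((n:ℝ) * ((V 0 (3*m') n).card : ℝ)))) * (n:ℝ)^(3*m'+3) := by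
              gcongr
          _ = ((3*m'+2):ℝ) * ((3*m'+1):ℝ) * (n:ℝ)^4 * (((V 0 (3*m') n).card : ℝ) * (n:ℝ)^(3*m')) := by
              ring
          _ ≤ ((3*m'+2):ℝ) * ((3*m'+1):ℝ) * (n:ℝ)^4 *
                ((((3*m').factorial : ℕ):ℝ) * (n:ℝ)^(0+m') * B^(3*m')) := by
              have hc : (0:ℝ) ≤ ((3*m'+2):ℝ) * ((3*m'+1):ℝ) * (n:ℝ)^4 := by positivity
              exact mul_le_mul_of_nonneg_left IH hc
          _ = (((3*m'+2):ℝ) * (((3*m'+1):ℝ) * (((3*m').factorial : ℕ):ℝ))) *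
                ((n:ℝ)^(0+m'+1) * B^(3*m')) * (n:ℝ)^3 := by
              ring
          _ ≤ (((3*m'+2):ℝ) * (((3*m'+1):ℝ) * (((3*m').factorial : ℕ):ℝ))) *
                ((n:ℝ)^(0+m'+1) * B^(3*m')) * (((3*m'+3):ℝ) * B^3) := by
              have hB3 : (n:ℝ)^3 ≤ B^3 := by gcongr
              have h2 : B^3 ≤ ((3*m'+3):ℝ) * B^3 := by nlinarith [pow_pos hB0 3]
              have hstep : (n:ℝ)^3 ≤ ((3*m'+3):ℝ) * B^3 := le_trans hB3 h2
              have hc : (0:ℝ) ≤ (((3*m'+2):ℝ) * (((3*m'+1):ℝ) * (((3*m').factorial : ℕ):ℝ))) *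
                ((n:ℝ)^(0+m'+1) * B^(3*m')) := by positivity
              calc _ = ((((3*m'+2):ℝ) * (((3*m'+1):ℝ) * (((3*m').factorial : ℕ):ℝ))) *
                    ((n:ℝ)^(0+m'+1) * B^(3*m'))) * ((n:ℝ)^3) := by ring
                _ ≤ ((((3*m'+2):ℝ) * (((3*m'+1):ℝ) * (((3*m').factorial : ℕ):ℝ))) *
                    ((n:ℝ)^(0+m'+1) * B^(3*m'))) * (((3*m'+3):ℝ) * B^3) := mul_le_mul_of_nonneg_left hstep hc
                _ = _ := by ring
          _ = (((3*m'+3).factorial : ℕ) : ℝ) * (n:ℝ)^(0+(m'+1)) * B^(3*m'+3) := by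
              rw [hfact]; ring
    case succ =>
      obtain ⟨q'', rfl⟩ : ∃ t, q = t+1 := ⟨q-1, by omega⟩
      have hsplit : ((V (p'+1) (q''+1) n).card : ℝ) =
          (((V (p'+1) (q''+1) n).filter (fun fg => ∃ j, fg.2 j = fg.1 (Fin.last p'))).card : ℝ) +
          (((V (p'+1) (q''+1) n).filter (fun fg => ¬ ∃ j, fg.2 j = fg.1 (Fin.last p'))).card : ℝ) := by
        exact_mod_cast card_split p' (q''+1) n
      have h1 : (((V (p'+1) (q''+1) n).filter (fun fg => ∃ j, fg.2 j = fg.1 (Fin.last p'))).card : ℝ) ≤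
          ((q''+1):ℝ) * ((n:ℝ) * ((V p' q'' n).card : ℝ)) := by
        exact_mod_cast card_part1 p' q'' n
      have IH1 := ih p' q'' m (by omega) (by omega) (by omega)
      have hfq : (((q''+1).factorial : ℕ) : ℝ) = ((q''+1):ℝ) * ((q''.factorial : ℕ) : ℝ) := by
        exact_mod_cast Nat.factorial_succ q''
      -- bound for the case-i part, used in all branches
      have hT1 : (((V (p'+1) (q''+1) n).filter (fun fg => ∃ j, fg.2 j = fg.1 (Fin.last p'))).card : ℝ)
            * (n:ℝ)^(q''+1) ≤
          (((q''+1).factorial : ℕ) : ℝ) * (n:ℝ)^(p'+1+m) * B^q'' * (n:ℝ) := by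
        calc (((V (p'+1) (q''+1) n).filter (fun fg => ∃ j, fg.2 j = fg.1 (Fin.last p'))).card : ℝ)
              * (n:ℝ)^(q''+1)
            ≤ (((q''+1):ℝ) * ((n:ℝ) * ((V p' q'' n).card : ℝ))) * (n:ℝ)^(q''+1) := by gcongr
          _ = ((q''+1):ℝ) * (n:ℝ)^2 * (((V p' q'' n).card : ℝ) * (n:ℝ)^q'') := by ring
          _ ≤ ((q''+1):ℝ) * (n:ℝ)^2 * (((q''.factorial : ℕ) : ℝ) * (n:ℝ)^(p'+m) * B^q'') := by
              exact mul_le_mul_of_nonneg_left IH1 (by positivity)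
          _ = (((q''+1).factorial : ℕ) : ℝ) * (n:ℝ)^(p'+1+m) * B^q'' * (n:ℝ) := by
              rw [hfq]; ring
      rcases Nat.lt_or_ge p' 2 with hp2 | hp2
      · have h2 : ((V (p'+1) (q''+1) n).filter (fun fg => ¬ ∃ j, fg.2 j = fg.1 (Fin.last p'))).card = 0 := by
          rw [no_case2 (by omega)]; rfl
        rw [hsplit, h2]
        push_cast
        rw [add_zero]
        calc (((V (p'+1) (q''+1) n).filter (fun fg => ∃ j, fg.2 j = fg.1 (Fin.last p'))).card : ℝ)
              * (n:ℝ)^(q''+1)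
            ≤ (((q''+1).factorial : ℕ) : ℝ) * (n:ℝ)^(p'+1+m) * B^q'' * (n:ℝ) := hT1
          _ ≤ (((q''+1).factorial : ℕ) : ℝ) * (n:ℝ)^(p'+1+m) * B^q'' * B := by gcongr
          _ = (((q''+1).factorial : ℕ) : ℝ) * (n:ℝ)^(p'+1+m) * B^(q''+1) := by ring
      · obtain ⟨p'', rfl⟩ : ∃ t, p' = t+2 := ⟨p'-2, by omega⟩
        have h2 : (((V (p''+3) (q''+1) n).filter (fun fg => ¬ ∃ j, fg.2 j = fg.1 (Fin.last (p''+2)))).card : ℝ) ≤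
            ((p''+2):ℝ) * (((p''+1):ℝ) * ((n:ℝ) * ((V p'' (q''+1) n).card : ℝ))) := by
          exact_mod_cast card_part2 p'' (q''+1) n
        have IH2 := ih p'' (q''+1) (m+1) (by omega) (by omega) (by omega)
        have hkey := key p'' Q n (by omega) hn
        have hT2 : (((V (p''+3) (q''+1) n).filter (fun fg => ¬ ∃ j, fg.2 j = fg.1 (Fin.last (p''+2)))).card : ℝ)
              * (n:ℝ)^(q''+1) ≤
            ((p''+2):ℝ) * ((p''+1):ℝ) * (((q''+1).factorial : ℕ) : ℝ) * (n:ℝ)^(p''+(m+1)+1) * B^(q''+1) := by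
          calc (((V (p''+3) (q''+1) n).filter (fun fg => ¬ ∃ j, fg.2 j = fg.1 (Fin.last (p''+2)))).card : ℝ)
                * (n:ℝ)^(q''+1)
              ≤ (((p''+2):ℝ) * (((p''+1):ℝ) * ((n:ℝ) * ((V p'' (q''+1) n).card : ℝ)))) * (n:ℝ)^(q''+1) := by
                gcongr
            _ = ((p''+2):ℝ) * ((p''+1):ℝ) * (n:ℝ) * (((V p'' (q''+1) n).card : ℝ) * (n:ℝ)^(q''+1)) := by
                ring
            _ ≤ ((p''+2):ℝ) * ((p''+1):ℝ) * (n:ℝ) *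
                  ((((q''+1).factorial : ℕ) : ℝ) * (n:ℝ)^(p''+(m+1)) * B^(q''+1)) := by
                exact mul_le_mul_of_nonneg_left IH2 (by positivity)
            _ = ((p''+2):ℝ) * ((p''+1):ℝ) * (((q''+1).factorial : ℕ) : ℝ) * (n:ℝ)^(p''+(m+1)+1) * B^(q''+1) := by
                ring
        rw [hsplit, add_mul]
        have hgoal :
            (((q''+1).factorial : ℕ) : ℝ) * (n:ℝ)^(p''+2+1+m) * B^q'' * (n:ℝ) +
            ((p''+2):ℝ) * ((p''+1):ℝ) * (((q''+1).factorial : ℕ) : ℝ) * (n:ℝ)^(p''+(m+1)+1) * B^(q''+1) ≤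
            (((q''+1).factorial : ℕ) : ℝ) * (n:ℝ)^(p''+2+1+m) * B^(q''+1) := by
          have hF : (0:ℝ) ≤ (((q''+1).factorial : ℕ) : ℝ) * (n:ℝ)^(p''+m+2) * B^q'' := by positivity
          have expand : (((q''+1).factorial : ℕ) : ℝ) * (n:ℝ)^(p''+2+1+m) * B^q'' * (n:ℝ) +
              ((p''+2):ℝ) * ((p''+1):ℝ) * (((q''+1).factorial : ℕ) : ℝ) * (n:ℝ)^(p''+(m+1)+1) * B^(q''+1) =
              ((((q''+1).factorial : ℕ) : ℝ) * (n:ℝ)^(p''+m+2) * B^q'') *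
                ((n:ℝ)^2 + ((p''+2):ℝ) * ((p''+1):ℝ) * B) := by
            ring
          have expand2 : (((q''+1).factorial : ℕ) : ℝ) * (n:ℝ)^(p''+2+1+m) * B^(q''+1) =
              ((((q''+1).factorial : ℕ) : ℝ) * (n:ℝ)^(p''+m+2) * B^q'') * ((n:ℝ) * B) := by
            ring
          rw [expand, expand2]
          apply mul_le_mul_of_nonneg_left _ hF
          have hnb : (n:ℝ) * B = (n:ℝ)^2 + (Q:ℝ)^2 * (n:ℝ) := by rw [hBdef]; ring
          rw [hnb]
          have hkb : ((p''+2):ℝ) * ((p''+1):ℝ) * B ≤ (Q:ℝ)^2 * (n:ℝ) := by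
            rw [hBdef]; exact hkey
          linarith
        exact le_trans (add_le_add hT1 hT2) hgoal
noncomputable def Zc (n : ℕ) (u : Fin n → Fin 3) : ℂ := ∑ j, w (u j)

lemma Zc_counts (n : ℕ) (u : Fin n → Fin 3) :
    Zc n u = ∑ k : Fin 3, (cnt3 n u k : ℂ) * w k := by
  rw [Zc]
  rw [← Finset.sum_fiberwise (univ : Finset (Fin n)) u (fun j => w (u j))]
  congr 1
  funext k
  rw [Finset.sum_congr rfl (fun j hj => by
    rw [(Finset.mem_filter.mp hj).2])]
  rw [Finset.sum_const, cnt3, nsmul_eq_mul]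

lemma S3_complex (n : ℕ) (u : Fin n → Fin 3) :
    ((S3 n u : ℝ) : ℂ) = Zc n u * starRingEnd ℂ (Zc n u) := by
  rw [Zc_counts]
  rw [map_sum]
  have hc : ∀ k : Fin 3, starRingEnd ℂ ((cnt3 n u k : ℂ) * w k) = (cnt3 n u k : ℂ) * (w k)^2 := by
    intro k
    rw [map_mul, conj_w, Complex.conj_natCast]
  rw [Finset.sum_congr rfl (fun k _ => hc k)]
  rw [Fin.sum_univ_three, Fin.sum_univ_three]
  have h0 : w 0 = 1 := by simp [w]
  have h1 : w 1 = zeta := by simp [w]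
  have h2 : w 2 = zeta^2 := by rw [w]; norm_num
  rw [h0, h1, h2, S3]
  push_cast
  set A := (cnt3 n u 0 : ℂ)
  set B := (cnt3 n u 1 : ℂ)
  set C := (cnt3 n u 2 : ℂ)
  linear_combination (-(A*B + A*C + B*C)) * hsum - (B^2 + C^2*(zeta^3+1) + A*C*zeta + B*C*(zeta^2+zeta)) * hz3
lemma prod_comp_cnt {d n : ℕ} (f : Fin d → Fin n) (F : Fin n → ℂ) :
    ∏ i, F (f i) = ∏ j, (F j)^(cnt f j) := by
  rw [← Finset.prod_fiberwise univ f (fun i => F (f i))]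
  congr 1; funext j
  rw [Finset.prod_congr rfl (fun i hi => by rw [(Finset.mem_filter.mp hi).2]),
    Finset.prod_const, cnt]

lemma sum_expand (n d : ℕ) :
    ∑ u : Fin n → Fin 3, ((3:ℂ)⁻¹)^n * (Zc n u * starRingEnd ℂ (Zc n u))^d
      = ((V d d n).card : ℂ) := by
  have step1 : ∀ u : Fin n → Fin 3,
      (Zc n u * starRingEnd ℂ (Zc n u))^d =
      ∑ f : Fin d → Fin n, ∑ g : Fin d → Fin n,
        (∏ i, w (u (f i))) * ∏ i, ((w (u (g i)))^2) := by
    intro u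
    rw [mul_pow, Zc, map_sum]
    rw [Fintype.sum_pow (fun j => w (u j)) d]
    rw [Finset.sum_congr rfl (fun j _ => conj_w (u j)), Fintype.sum_pow (fun j => (w (u j))^2) d]
    rw [Finset.sum_mul_sum]
  calc ∑ u : Fin n → Fin 3, ((3:ℂ)⁻¹)^n * (Zc n u * starRingEnd ℂ (Zc n u))^d
      = ∑ u : Fin n → Fin 3, ∑ f : Fin d → Fin n, ∑ g : Fin d → Fin n,
          ((3:ℂ)⁻¹)^n * ((∏ i, w (u (f i))) * ∏ i, ((w (u (g i)))^2)) := by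
        refine Finset.sum_congr rfl (fun u _ => ?_)
        rw [step1, Finset.mul_sum]
        exact Finset.sum_congr rfl (fun f _ => Finset.mul_sum _ _ _)
    _ = ∑ f : Fin d → Fin n, ∑ g : Fin d → Fin n, ∑ u : Fin n → Fin 3,
          ((3:ℂ)⁻¹)^n * ((∏ i, w (u (f i))) * ∏ i, ((w (u (g i)))^2)) := by
        rw [Finset.sum_comm]
        exact Finset.sum_congr rfl (fun f _ => Finset.sum_comm)
    _ = ∑ f : Fin d → Fin n, ∑ g : Fin d → Fin n,
          (if (∀ j, (cnt f j + 2 * cnt g j) % 3 = 0) then (1:ℂ) else 0) := by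
        refine Finset.sum_congr rfl (fun f _ => Finset.sum_congr rfl (fun g _ => ?_))
        have inner : ∀ u : Fin n → Fin 3,
            (∏ i, w (u (f i))) * ∏ i, ((w (u (g i)))^2) =
            ∏ j, (w (u j))^(cnt f j + 2 * cnt g j) := by
          intro u
          rw [prod_comp_cnt f (fun j => w (u j)),
            prod_comp_cnt g (fun j => (w (u j))^2), ← Finset.prod_mul_distrib]
          refine Finset.prod_congr rfl (fun j _ => ?_)
          rw [← pow_mul, ← pow_add, Nat.mul_comm]
        rw [Finset.sum_congr rfl (fun u _ => congrArg _ (inner u))]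
        rw [← Finset.mul_sum]
        have hpi : ∑ u : Fin n → Fin 3, ∏ j, (w (u j))^(cnt f j + 2 * cnt g j)
            = ∏ j : Fin n, ∑ t : Fin 3, (w t)^(cnt f j + 2 * cnt g j) := by
          rw [← Fintype.prod_sum (fun j t => (w t)^(cnt f j + 2 * cnt g j))]
        rw [hpi]
        rw [Finset.prod_congr rfl (fun j _ => w_pow_sum (cnt f j + 2 * cnt g j))]
        by_cases hall : ∀ j, (cnt f j + 2 * cnt g j) % 3 = 0
        · rw [if_pos hall]
          rw [Finset.prod_congr rfl (fun j _ => if_pos (hall j)), Finset.prod_const]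
          simp [Finset.card_univ]
        · rw [if_neg hall]
          push_neg at hall
          obtain ⟨j0, hj0⟩ := hall
          rw [Finset.prod_eq_zero (Finset.mem_univ j0)
            (show (if (cnt f j0 + 2*cnt g j0) % 3 = 0 then (3:ℂ) else 0) = 0 from if_neg hj0),
            mul_zero]
    _ = ((V d d n).card : ℂ) := by
        have hiff : ∀ fg : (Fin d → Fin n) × (Fin d → Fin n),
            (∀ j, (cnt fg.1 j + 2 * cnt fg.2 j) % 3 = 0) ↔ good fg := by
          intro fg
          constructor
          · intro h x; have := h x; unfold Nat.ModEq; omega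
          · intro h x; have := h x; unfold Nat.ModEq at this; omega
        rw [← Fintype.sum_prod_type']
        rw [Finset.sum_congr rfl (fun fg _ => by rw [if_congr (hiff fg) rfl rfl])]
        rw [Finset.sum_boole]
        rfl
open MeasureTheory ENNReal
lemma integral_S3_pow (μ3 : Measure (Fin 3)) [IsProbabilityMeasure μ3]
    (hμ3 : ∀ k, μ3 {k} = 1 / 3) (n d : ℕ) :
    ∫ u : Fin n → Fin 3, S3 n u ^ d ∂(Measure.pi fun _ => μ3) = ((V d d n).card : ℝ) := by
  rw [integral_fintype Integrable.of_finite]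
  simp only [measureReal_def]
  have hμu : ∀ u : Fin n → Fin 3, (Measure.pi fun _ : Fin n => μ3) {u} = (3:ℝ≥0∞)⁻¹ ^ n := by
    intro u
    rw [show ({u} : Set (Fin n → Fin 3)) = Set.pi Set.univ (fun j => {u j}) from
      (Set.univ_pi_singleton u).symm, Measure.pi_pi]
    simp [hμ3, one_div]
  have htr : ∀ u : Fin n → Fin 3,
      ((Measure.pi fun _ : Fin n => μ3) {u}).toReal = ((3:ℝ)⁻¹) ^ n := by
    intro u; rw [hμu u]; simp
  rw [Finset.sum_congr rfl (fun u _ => by rw [htr u, smul_eq_mul])]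
  apply Complex.ofReal_inj.mp
  push_cast
  rw [Finset.sum_congr rfl (fun u (_ : u ∈ Finset.univ) => by
    rw [show ((S3 n u : ℝ) : ℂ) ^ d = (Zc n u * starRingEnd ℂ (Zc n u))^d by rw [S3_complex]])]
  exact sum_expand n d
lemma exp_half_lt_two : Real.exp (1/2) < 2 := by
  have h1 : Real.exp (1/2) ^ 2 < 4 := by
    have : Real.exp (1/2) ^ (2:ℕ) = Real.exp ((2:ℕ) * (1/2)) := (Real.exp_nat_mul _ 2).symm
    rw [this]
    norm_num
    exact lt_trans Real.exp_one_lt_d9 (by norm_num)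
  nlinarith [Real.exp_pos (1/2)]

lemma card_bound_final {Q n d : ℕ} (hd1 : 1 ≤ d) (hdQ : d ≤ Q) (hn : 2 * Q^3 ≤ n) :
    ((V d d n).card : ℝ) ≤ 2 * ((n:ℝ)^d * (d.factorial : ℝ)) := by
  have hQ1 : 1 ≤ Q := le_trans hd1 hdQ
  have hn1 : 1 ≤ n := le_trans (by nlinarith [Nat.one_le_pow 3 Q hQ1]) hn
  have hn0 : (0:ℝ) < n := by exact_mod_cast Nat.lt_of_lt_of_le Nat.zero_lt_one hn1
  have hcb := count_bound Q n hQ1 (by omega) (2*d) d d 0 (by omega) (by omega) hdQ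
  have hpow : ((n:ℝ) + (Q:ℝ)^2)^d ≤ 2 * (n:ℝ)^d := by
    have e1 : (n:ℝ) + (Q:ℝ)^2 = (n:ℝ) * (1 + (Q:ℝ)^2/(n:ℝ)) := by field_simp
    rw [e1, mul_pow]
    have e2 : (1:ℝ) + (Q:ℝ)^2/(n:ℝ) ≤ Real.exp ((Q:ℝ)^2/(n:ℝ)) := by
      have := Real.add_one_le_exp ((Q:ℝ)^2/(n:ℝ)); linarith
    have e3 : ((1:ℝ) + (Q:ℝ)^2/(n:ℝ))^d ≤ Real.exp ((Q:ℝ)^2/(n:ℝ))^d :=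
      pow_le_pow_left₀ (by positivity) e2 d
    have e4 : Real.exp ((Q:ℝ)^2/(n:ℝ))^d = Real.exp ((d:ℝ) * ((Q:ℝ)^2/(n:ℝ))) :=
      (Real.exp_nat_mul _ d).symm
    have e5 : (d:ℝ) * ((Q:ℝ)^2/(n:ℝ)) ≤ 1/2 := by
      rw [mul_div_assoc']
      rw [div_le_iff₀ hn0]
      have hdQ' : (d:ℝ) ≤ Q := by exact_mod_cast hdQ
      have hn' : 2 * (Q:ℝ)^3 ≤ n := by exact_mod_cast hn
      have hQ0 : (0:ℝ) ≤ (Q:ℝ) := Nat.cast_nonneg Q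
      nlinarith
    have e6 : Real.exp ((d:ℝ) * ((Q:ℝ)^2/(n:ℝ))) ≤ Real.exp (1/2) := Real.exp_le_exp.mpr e5
    have h7 := exp_half_lt_two
    have h8 : ((1:ℝ) + (Q:ℝ)^2/(n:ℝ))^d ≤ 2 := by
      calc ((1:ℝ) + (Q:ℝ)^2/(n:ℝ))^d ≤ Real.exp ((d:ℝ) * ((Q:ℝ)^2/(n:ℝ))) := by rw [← e4]; exact e3
        _ ≤ 2 := by linarith
    calc (n:ℝ)^d * ((1:ℝ) + (Q:ℝ)^2/(n:ℝ))^d ≤ (n:ℝ)^d * 2 :=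
          mul_le_mul_of_nonneg_left h8 (by positivity)
      _ = 2 * (n:ℝ)^d := by ring
  -- combine
  have hnd : (0:ℝ) < (n:ℝ)^d := pow_pos hn0 d
  have chain : ((V d d n).card : ℝ) * (n:ℝ)^d ≤ (2 * ((n:ℝ)^d * (d.factorial : ℝ))) * (n:ℝ)^d := by
    calc ((V d d n).card : ℝ) * (n:ℝ)^d
        ≤ (d.factorial : ℝ) * (n:ℝ)^(d+0) * ((n:ℝ) + (Q:ℝ)^2)^d := hcb
      _ ≤ (d.factorial : ℝ) * (n:ℝ)^(d+0) * (2 * (n:ℝ)^d) := by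
          exact mul_le_mul_of_nonneg_left hpow (by positivity)
      _ = (2 * ((n:ℝ)^d * (d.factorial : ℝ))) * (n:ℝ)^d := by ring
  exact le_of_mul_le_mul_right chain hnd
end S16

open S16

/-- **Low-degree hardness for synchronization over a group of order 3.**
For `0 ≤ λ < 1`, with `u₁,…,u_n` i.i.d. uniform on `{0,1,2}` and any `D : ℕ → ℕ`
with `D(n)³/n → 0`, eventually
`∑_{d=0}^{D(n)} (λ^{2d}/(n^d d!)) E[S₃^d] ≤ 8 ∑_{d=0}^∞ d² λ^{2d} + 1`,
and in particular the left-hand sides are bounded uniformly in `n`. -/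
theorem stmt16 (lam : ℝ) (hlam0 : 0 ≤ lam) (hlam1 : lam < 1)
    (μ3 : Measure (Fin 3)) [IsProbabilityMeasure μ3]
    (hμ3 : ∀ k, μ3 {k} = 1 / 3)
    (D : ℕ → ℕ)
    (hD : Tendsto (fun n => (D n : ℝ) ^ 3 / n) atTop (nhds 0)) :
    (∃ N₀ : ℕ, ∀ n ≥ N₀,
      ∑ d ∈ Finset.range (D n + 1),
        lam ^ (2 * d) / ((n : ℝ) ^ d * d.factorial) *
          ∫ u : Fin n → Fin 3, S3 n u ^ d ∂(Measure.pi fun _ => μ3)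
      ≤ 8 * (∑' d : ℕ, (d : ℝ) ^ 2 * lam ^ (2 * d)) + 1) ∧
    (∃ C : ℝ, ∀ n : ℕ,
      ∑ d ∈ Finset.range (D n + 1),
        lam ^ (2 * d) / ((n : ℝ) ^ d * d.factorial) *
          ∫ u : Fin n → Fin 3, S3 n u ^ d ∂(Measure.pi fun _ => μ3)
      ≤ C) := by
  set G : ℕ → ℝ := fun n => ∑ d ∈ Finset.range (D n + 1),
    lam ^ (2 * d) / ((n : ℝ) ^ d * d.factorial) *
      ∫ u : Fin n → Fin 3, S3 n u ^ d ∂(Measure.pi fun _ => μ3) with hG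
  set T : ℝ := ∑' d : ℕ, (d : ℝ) ^ 2 * lam ^ (2 * d) with hT
  have hsq : lam^2 < 1 := by nlinarith
  have hsumm : Summable (fun d : ℕ => (d:ℝ)^2 * lam^(2*d)) := by
    have h := summable_pow_mul_geometric_of_norm_lt_one (R := ℝ) 2
      (r := lam^2) (by rw [Real.norm_eq_abs, abs_of_nonneg (by positivity)]; exact hsq)
    refine h.congr (fun d => ?_)
    rw [pow_mul]
  have hT0 : (0:ℝ) ≤ T := tsum_nonneg (fun d => by positivity)
  -- the eventual bound
  have main : ∀ n : ℕ, 1 ≤ n → 2 * (D n)^3 ≤ n → G n ≤ 8 * T + 1 := by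
    intro n hn1 hn2
    have hn0 : (0:ℝ) < n := by exact_mod_cast hn1
    rw [hG]
    simp only []
    rw [Finset.sum_range_succ']
    have hf0 : lam ^ (2*0) / ((n:ℝ)^0 * (Nat.factorial 0)) *
        ∫ u : Fin n → Fin 3, S3 n u ^ 0 ∂(Measure.pi fun _ => μ3) = 1 := by
      rw [integral_S3_pow μ3 hμ3 n 0, card_V00']
      norm_num
    rw [hf0]
    have hterm : ∀ i ∈ Finset.range (D n), lam ^ (2*(i+1)) / ((n:ℝ)^(i+1) * ((i+1).factorial)) *
        (∫ u : Fin n → Fin 3, S3 n u ^ (i+1) ∂(Measure.pi fun _ => μ3)) ≤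
        8 * ((i+1:ℕ):ℝ)^2 * lam^(2*(i+1)) := by
      intro i hi
      have hiD : i + 1 ≤ D n := Finset.mem_range.mp hi
      rw [integral_S3_pow μ3 hμ3 n (i+1)]
      have hb0 : (0:ℝ) < (n:ℝ)^(i+1) * ((i+1).factorial : ℝ) := by positivity
      have hcard := card_bound_final (Nat.le_add_left 1 i) hiD hn2
      have ht0 : (0:ℝ) ≤ lam ^ (2*(i+1)) := by positivity
      calc lam ^ (2*(i+1)) / ((n:ℝ)^(i+1) * ((i+1).factorial)) * ((V (i+1) (i+1) n).card : ℝ)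
          ≤ lam ^ (2*(i+1)) / ((n:ℝ)^(i+1) * ((i+1).factorial)) *
              (2 * ((n:ℝ)^(i+1) * ((i+1).factorial : ℝ))) := by
            exact mul_le_mul_of_nonneg_left hcard (by positivity)
        _ = 2 * lam ^ (2*(i+1)) := by field_simp
        _ ≤ 8 * ((i+1:ℕ):ℝ)^2 * lam^(2*(i+1)) := by
            have h1 : (1:ℝ) ≤ ((i+1:ℕ):ℝ)^2 := by
              have : (1:ℝ) ≤ ((i+1:ℕ):ℝ) := by exact_mod_cast Nat.le_add_left 1 i
              nlinarith
            nlinarith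
    have hsum1 : ∑ i ∈ Finset.range (D n), lam ^ (2*(i+1)) / ((n:ℝ)^(i+1) * ((i+1).factorial)) *
        (∫ u : Fin n → Fin 3, S3 n u ^ (i+1) ∂(Measure.pi fun _ => μ3)) ≤
        ∑ i ∈ Finset.range (D n), 8 * ((i+1:ℕ):ℝ)^2 * lam^(2*(i+1)) :=
      Finset.sum_le_sum hterm
    have hsum2 : ∑ i ∈ Finset.range (D n), 8 * ((i+1:ℕ):ℝ)^2 * lam^(2*(i+1)) ≤ 8 * T := by
      have e1 : ∑ i ∈ Finset.range (D n), 8 * ((i+1:ℕ):ℝ)^2 * lam^(2*(i+1)) =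
          8 * ∑ i ∈ Finset.range (D n), ((i+1:ℕ):ℝ)^2 * lam^(2*(i+1)) := by
        rw [Finset.mul_sum]
        exact Finset.sum_congr rfl (fun i _ => by ring)
      rw [e1]
      have e2 : ∑ i ∈ Finset.range (D n), ((i+1:ℕ):ℝ)^2 * lam^(2*(i+1)) =
          ∑ i ∈ Finset.range (D n + 1), ((i:ℕ):ℝ)^2 * lam^(2*i) := by
        rw [Finset.sum_range_succ' (fun i => ((i:ℕ):ℝ)^2 * lam^(2*i)) (D n)]
        norm_num
      rw [e2]
      have e3 : ∑ i ∈ Finset.range (D n + 1), ((i:ℕ):ℝ)^2 * lam^(2*i) ≤ T :=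
        Summable.sum_le_tsum _ (fun i _ => by positivity) hsumm
      linarith
    linarith
  -- choose N₀
  obtain ⟨N, hN⟩ := Metric.tendsto_atTop.mp hD (1/2) (by norm_num)
  set N₀ := max N 1 with hN₀
  have hcond : ∀ n ≥ N₀, 1 ≤ n ∧ 2 * (D n)^3 ≤ n := by
    intro n hn
    have hn1 : 1 ≤ n := le_trans (le_max_right N 1) hn
    have hdist := hN n (le_trans (le_max_left N 1) hn)
    rw [Real.dist_eq, sub_zero] at hdist
    have hn0 : (0:ℝ) < n := by exact_mod_cast hn1
    have habs : ((D n : ℝ))^3 / n < 1/2 := lt_of_abs_lt hdist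
    have h2 : ((D n : ℝ))^3 < n / 2 := by
      rw [div_lt_iff₀ hn0] at habs
      linarith
    have : ((2 * (D n)^3 : ℕ) : ℝ) < n := by push_cast; linarith
    exact ⟨hn1, Nat.le_of_lt (by exact_mod_cast this)⟩
  constructor
  · exact ⟨N₀, fun n hn => main n (hcond n hn).1 (hcond n hn).2⟩
  · refine ⟨(8 * T + 1) + ∑ k ∈ Finset.range N₀, |G k|, fun n => ?_⟩
    have habs0 : (0:ℝ) ≤ ∑ k ∈ Finset.range N₀, |G k| :=
      Finset.sum_nonneg (fun k _ => abs_nonneg _)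
    rcases lt_or_ge n N₀ with h | h
    · have h1 : G n ≤ |G n| := le_abs_self _
      have h2 : |G n| ≤ ∑ k ∈ Finset.range N₀, |G k| :=
        Finset.single_le_sum (fun k _ => abs_nonneg (G k)) (Finset.mem_range.mpr h)
      linarith
    · have := main n (hcond n h).1 (hcond n h).2
      linarith
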